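/- (Krall–Frink) Let a ∈ ℂ with a − 1 ∉ {0, −1, −2, …}. For each non-negative integer m, let y_m(x;a) be the unique polynomial of degree m with constant term 1 that is an eigenfunction of the operator d^B = x² d²/dx² + (ax + 2) d/dx, and let ρ(x;a) = (1/(2πi)) Σ_{k=0}^∞ (Γ(a)/Γ(a+k−1)) (−2/x)^k (a function defined for x ≠ 0 by this everywhere-convergent series). Then for all non-negative integers n ≠ m, the contour integral around the unit circle satisfies ∫_{|x|=1} y_n(x;a) y_m(x;a) ρ(x;a) dx = 0. -/

import Mathlib

open Polynomial Real

noncomputable section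

/-- The weight function `ρ(x;a)` of Krall and Frink. -/
def besselRho (a : ℂ) (x : ℂ) : ℂ :=
  (1 / (2 * (π : ℂ) * Complex.I)) *
    ∑' k : ℕ, Complex.Gamma a / Complex.Gamma (a + (k : ℂ) - 1) * (-2 / x) ^ k

/-- `y` is the Bessel polynomial `y_m(·;a)`: the polynomial of degree `m` with constant
term `1` satisfying `x²y'' + (ax+2)y' = m(m+a-1)y`. -/
def IsBesselPoly1 (a : ℂ) (m : ℕ) (y : Polynomial ℂ) : Prop :=
  y.natDegree = m ∧ y.coeff 0 = 1 ∧
    X ^ 2 * derivative (derivative y) + (Polynomial.C a * X + 2) * derivative y =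
      Polynomial.C ((m : ℂ) * ((m : ℂ) + a - 1)) * y

end

noncomputable section

set_option linter.unusedSectionVars false

namespace KrallFrinkAux

open Filter MeasureTheory

/-- The moments of the Krall–Frink weight. -/
def mu (a : ℂ) (j : ℕ) : ℂ := (-2) ^ (j + 1) * Complex.Gamma a / Complex.Gamma (a + j)

/-- The coefficients of the weight's Laurent series. -/
def t (a : ℂ) (k : ℕ) : ℂ := Complex.Gamma a / Complex.Gamma (a + k - 1) * (-2) ^ k

/-- The moment functional. -/
def L (a : ℂ) : Polynomial ℂ →ₗ[ℂ] ℂ :=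
  Polynomial.lsum (fun j => LinearMap.toSpanSingleton ℂ ℂ (mu a j))

lemma L_monomial (a : ℂ) (j : ℕ) (c : ℂ) : L a (monomial j c) = c * mu a j := by
  simp [L, Polynomial.lsum_apply, Polynomial.sum_monomial_index, LinearMap.toSpanSingleton_apply,
    smul_eq_mul]

variable {a : ℂ} (ha : ∀ k : ℕ, a - 1 ≠ -(k : ℂ))

include ha

lemma shift_ne (k : ℕ) : a + (k : ℂ) ≠ 0 := by
  intro h
  apply ha (k + 1)
  push_cast
  linear_combination h

lemma shift_ne' (k : ℕ) : a + (k : ℂ) - 1 ≠ 0 := by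
  intro h
  apply ha k
  linear_combination h

lemma Gamma_ne : Complex.Gamma a ≠ 0 := by
  apply Complex.Gamma_ne_zero
  intro m h
  apply ha (m + 1)
  push_cast
  linear_combination h

lemma Gamma_shift_ne (k : ℕ) : Complex.Gamma (a + k) ≠ 0 := by
  apply Complex.Gamma_ne_zero
  intro m h
  apply shift_ne ha (k + m)
  push_cast
  linear_combination h

lemma Gamma_shift_ne' (k : ℕ) : Complex.Gamma (a + k - 1) ≠ 0 := by
  apply Complex.Gamma_ne_zero
  intro m h
  apply ha (k + m)
  push_cast
  linear_combination h

lemma mu_rec (j : ℕ) : ((j : ℂ) + a) * mu a (j + 1) + 2 * mu a j = 0 := by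
  have h1 : a + (j : ℂ) ≠ 0 := shift_ne ha j
  have h2 : Complex.Gamma (a + j) ≠ 0 := Gamma_shift_ne ha j
  simp only [mu]
  push_cast
  rw [show a + ((j : ℂ) + 1) = (a + j) + 1 by ring, Complex.Gamma_add_one _ h1]
  field_simp
  ring

lemma L_pearson (W : Polynomial ℂ) :
    L a (X ^ 2 * derivative W + (Polynomial.C a * X + 2) * W) = 0 := by
  induction W using Polynomial.induction_on' with
  | add p q hp hq =>
    rw [show X ^ 2 * derivative (p + q) + (Polynomial.C a * X + 2) * (p + q)
        = (X ^ 2 * derivative p + (Polynomial.C a * X + 2) * p)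
          + (X ^ 2 * derivative q + (Polynomial.C a * X + 2) * q) by
      rw [derivative_add]; ring]
    rw [map_add, hp, hq, add_zero]
  | monomial n c =>
    have h2 : (2 : Polynomial ℂ) = Polynomial.C 2 := by norm_cast
    have expand : X ^ 2 * derivative (monomial n c) + (Polynomial.C a * X + 2) * monomial n c
        = monomial (2 + (n - 1)) (1 * (c * n)) +
          (monomial (1 + n) (a * c) + monomial (0 + n) (2 * c)) := by
      rw [derivative_monomial, X_pow_eq_monomial, C_mul_X_eq_monomial, h2, ← monomial_zero_left,
        add_mul, monomial_mul_monomial, monomial_mul_monomial, monomial_mul_monomial]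
    rw [expand, map_add, map_add, L_monomial, L_monomial, L_monomial]
    cases n with
    | zero =>
      simp only [Nat.cast_zero, mul_zero, zero_mul, zero_add, one_mul, mul_zero]
      have := mu_rec ha 0
      simp only [Nat.cast_zero, zero_add] at this
      linear_combination c * this
    | succ m =>
      have hidx : 2 + (m + 1 - 1) = m + 1 + 1 := by omega
      have hidx2 : 1 + (m + 1) = m + 1 + 1 := by omega
      have hidx3 : 0 + (m + 1) = m + 1 := by omega
      rw [hidx, hidx2, hidx3]
      have := mu_rec ha (m + 1)
      push_cast at this ⊢
      linear_combination c * this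

lemma L_symm (p q : Polynomial ℂ) :
    L a ((X ^ 2 * derivative (derivative p) + (Polynomial.C a * X + 2) * derivative p) * q) =
    L a (p * (X ^ 2 * derivative (derivative q) + (Polynomial.C a * X + 2) * derivative q)) := by
  have key := L_pearson ha (derivative p * q - p * derivative q)
  have expand : X ^ 2 * derivative (derivative p * q - p * derivative q) +
      (Polynomial.C a * X + 2) * (derivative p * q - p * derivative q)
      = (X ^ 2 * derivative (derivative p) + (Polynomial.C a * X + 2) * derivative p) * q -
        p * (X ^ 2 * derivative (derivative q) + (Polynomial.C a * X + 2) * derivative q) := by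
    rw [derivative_sub, derivative_mul, derivative_mul]
    ring
  rw [expand, map_sub] at key
  linear_combination key

lemma t_ne (k : ℕ) : t a k ≠ 0 := by
  apply mul_ne_zero (div_ne_zero (Gamma_ne ha) (Gamma_shift_ne' ha k))
  exact pow_ne_zero _ (by norm_num)

lemma t_succ (k : ℕ) : t a (k + 1) = t a k * (-2) / (a + k - 1) := by
  have h1 : a + (k : ℂ) - 1 ≠ 0 := shift_ne' ha k
  have h2 : Complex.Gamma (a + k - 1) ≠ 0 := Gamma_shift_ne' ha k
  have h3 : Complex.Gamma (a + ((k : ℕ) + 1 : ℕ) - 1) = (a + k - 1) * Complex.Gamma (a + k - 1) := by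
    push_cast
    rw [show a + ((k : ℂ) + 1) - 1 = (a + k - 1) + 1 by ring, Complex.Gamma_add_one _ h1]
  simp only [t, h3, pow_succ]
  field_simp

lemma summable_norm_t : Summable (fun k => ‖t a k‖) := by
  apply summable_of_ratio_test_tendsto_lt_one (l := 0) zero_lt_one
  · exact Eventually.of_forall fun k => by simpa using t_ne ha k
  · have hratio : ∀ k : ℕ, ‖(fun k => ‖t a k‖) (k + 1)‖ / ‖(fun k => ‖t a k‖) k‖
        = 2 / ‖a + k - 1‖ := by
      intro k
      simp only [norm_norm]
      rw [t_succ ha k, norm_div, norm_mul, mul_div_assoc]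
      have h0 : ‖t a k‖ ≠ 0 := norm_ne_zero_iff.mpr (t_ne ha k)
      rw [mul_comm, mul_div_assoc, div_self h0, mul_one]
      norm_num
    simp only [hratio]
    apply Filter.Tendsto.div_atTop tendsto_const_nhds
    apply tendsto_atTop_mono (f := fun k : ℕ => (k : ℝ) - ‖(1 : ℂ) - a‖)
    · intro k
      have := norm_sub_norm_le ((k : ℂ)) (1 - a)
      simpa [show (k : ℂ) - (1 - a) = a + k - 1 by ring] using this
    · exact tendsto_atTop_add_const_right _ _ tendsto_natCast_atTop_atTop

lemma norm_term (k : ℕ) (θ : ℝ) :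
    ‖Complex.Gamma a / Complex.Gamma (a + (k : ℂ) - 1) * (-2 / circleMap 0 1 θ) ^ k‖
      = ‖t a k‖ := by
  have hz : ‖circleMap 0 1 θ‖ = 1 := by simp
  simp only [t, norm_mul, norm_pow, norm_div, map_neg_eq_map, hz]
  norm_num

lemma cont_term (k : ℕ) :
    Continuous (fun θ : ℝ =>
      Complex.Gamma a / Complex.Gamma (a + (k : ℂ) - 1) * (-2 / circleMap 0 1 θ) ^ k) := by
  apply Continuous.mul continuous_const
  apply Continuous.pow
  exact Continuous.div continuous_const (continuous_circleMap 0 1)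
    (fun θ => circleMap_ne_center one_ne_zero)

lemma cont_rho_circ : Continuous (fun θ : ℝ => besselRho a (circleMap 0 1 θ)) := by
  unfold besselRho
  apply Continuous.mul continuous_const
  exact continuous_tsum (cont_term ha) (summable_norm_t ha) (fun k θ => (norm_term ha k θ).le)

omit ha

/-- The summands of the circle integral of `x ^ j • ρ`. -/
def F (a : ℂ) (j k : ℕ) (θ : ℝ) : ℂ :=
  (circleMap 0 1 θ * Complex.I) * ((circleMap 0 1 θ) ^ j *
    ((1 / (2 * (π : ℂ) * Complex.I)) *
      (Complex.Gamma a / Complex.Gamma (a + (k : ℂ) - 1) * (-2 / circleMap 0 1 θ) ^ k)))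

lemma F_cont (a : ℂ) (j k : ℕ) : Continuous (F a j k) := by
  unfold F
  apply Continuous.mul
  · exact ((continuous_circleMap 0 1).mul continuous_const)
  apply Continuous.mul (((continuous_circleMap 0 1)).pow j)
  apply Continuous.mul continuous_const
  apply Continuous.mul continuous_const
  exact Continuous.pow (Continuous.div continuous_const (continuous_circleMap 0 1)
    (fun θ => circleMap_ne_center one_ne_zero)) k

include ha

lemma F_norm (j k : ℕ) (θ : ℝ) :
    ‖F a j k θ‖ = ‖(1 / (2 * (π : ℂ) * Complex.I))‖ * ‖t a k‖ := by
  have hz : ‖circleMap 0 1 θ‖ = 1 := by simp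
  rw [show F a j k θ = ((circleMap 0 1 θ * Complex.I) * (circleMap 0 1 θ) ^ j *
      (1 / (2 * (π : ℂ) * Complex.I))) *
      (Complex.Gamma a / Complex.Gamma (a + (k : ℂ) - 1) * (-2 / circleMap 0 1 θ) ^ k)
    from by unfold F; ring]
  rw [norm_mul, norm_term ha]
  simp [norm_mul, hz]

lemma F_integral (j k : ℕ) :
    (∫ θ in Set.Ioc 0 (2 * π), F a j k θ) =
      if k = j + 1 then (1 / (2 * (π : ℂ) * Complex.I)) *
        (Complex.Gamma a / Complex.Gamma (a + (k : ℂ) - 1)) * (-2) ^ k *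
          (2 * (π : ℂ) * Complex.I) else 0 := by
  have h1 : (∫ θ in Set.Ioc 0 (2 * π), F a j k θ) = ∫ θ in (0 : ℝ)..(2 * π), F a j k θ :=
    (intervalIntegral.integral_of_le (by positivity)).symm
  have h2 : (∮ x in C(0, 1), x ^ j * ((1 / (2 * (π : ℂ) * Complex.I)) *
      (Complex.Gamma a / Complex.Gamma (a + (k : ℂ) - 1) * (-2 / x) ^ k)))
      = ∫ θ in (0 : ℝ)..(2 * π), F a j k θ := by
    simp only [circleIntegral, deriv_circleMap, smul_eq_mul, F]
  have key : Set.EqOn (fun x : ℂ => x ^ j * ((1 / (2 * (π : ℂ) * Complex.I)) *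
      (Complex.Gamma a / Complex.Gamma (a + (k : ℂ) - 1) * (-2 / x) ^ k)))
      (fun x : ℂ => ((1 / (2 * (π : ℂ) * Complex.I)) *
        (Complex.Gamma a / Complex.Gamma (a + (k : ℂ) - 1)) * (-2) ^ k) * (x - 0) ^ ((j : ℤ) - k))
      (Metric.sphere (0 : ℂ) 1) := by
    intro x hx
    have hx0 : x ≠ 0 := by
      intro h
      simp [h] at hx
    simp only [sub_zero]
    rw [zpow_sub₀ hx0, zpow_natCast, zpow_natCast, div_pow]
    field_simp
  rw [h1, ← h2, circleIntegral.integral_congr (by norm_num) key,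
    circleIntegral.integral_const_mul]
  by_cases hk : k = j + 1
  · subst hk
    have hexp : ((j : ℤ) - (j + 1 : ℕ)) = -1 := by push_cast; ring
    rw [hexp, if_pos rfl]
    have : (∮ z in C(0, 1), (z - 0) ^ (-1 : ℤ)) = (2 * (π : ℂ) * Complex.I) := by
      simp only [zpow_neg_one]
      exact circleIntegral.integral_sub_inv_of_mem_ball (by simp)
    rw [this]
  · have hne : ((j : ℤ) - k) ≠ -1 := by omega
    rw [circleIntegral.integral_sub_zpow_of_ne hne, mul_zero, if_neg hk]

lemma moment (j : ℕ) : (∮ x in C(0, 1), x ^ j * besselRho a x) = mu a j := by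
  have hpt : ∀ θ : ℝ, deriv (circleMap 0 1) θ •
      ((circleMap 0 1 θ) ^ j * besselRho a (circleMap 0 1 θ)) = ∑' k, F a j k θ := by
    intro θ
    rw [show (fun k => F a j k θ) = fun k : ℕ =>
        (circleMap 0 1 θ * Complex.I * ((circleMap 0 1 θ) ^ j * (1 / (2 * (π : ℂ) * Complex.I))))
          * (Complex.Gamma a / Complex.Gamma (a + (k : ℂ) - 1) * (-2 / circleMap 0 1 θ) ^ k)
      from funext fun k => by simp only [F]; ring]
    rw [tsum_mul_left, besselRho, deriv_circleMap, smul_eq_mul]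
    ring
  rw [circleIntegral, intervalIntegral.integral_of_le (by positivity)]
  simp only [hpt]
  rw [← MeasureTheory.integral_tsum_of_summable_integral_norm]
  · rw [tsum_eq_single (j + 1) (fun k hk => by rw [F_integral ha j k, if_neg hk])]
    rw [F_integral ha j (j + 1), if_pos rfl]
    have hπ : (2 * (π : ℂ) * Complex.I) ≠ 0 := by
      simp [Real.pi_ne_zero, Complex.I_ne_zero, Complex.ofReal_ne_zero]
    have hcast : a + ((j + 1 : ℕ) : ℂ) - 1 = a + j := by push_cast; ring
    rw [hcast]
    have hc : (1 / (2 * (π : ℂ) * Complex.I)) * (2 * (π : ℂ) * Complex.I) = 1 := by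
      rw [one_div, inv_mul_cancel₀ hπ]
    calc (1 / (2 * (π : ℂ) * Complex.I)) * (Complex.Gamma a / Complex.Gamma (a + (j : ℂ))) *
          (-2) ^ (j + 1) * (2 * (π : ℂ) * Complex.I)
        = (Complex.Gamma a / Complex.Gamma (a + (j : ℂ))) * (-2) ^ (j + 1) *
            ((1 / (2 * (π : ℂ) * Complex.I)) * (2 * (π : ℂ) * Complex.I)) := by ring
      _ = mu a j := by rw [hc]; unfold mu; ring
  · exact fun k => (F_cont a j k).integrableOn_Ioc
  · have hconst : ∀ k : ℕ, (∫ θ in Set.Ioc 0 (2 * π), ‖F a j k θ‖) =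
        (2 * π) * (‖(1 / (2 * (π : ℂ) * Complex.I))‖ * ‖t a k‖) := by
      intro k
      simp only [F_norm ha j k]
      rw [MeasureTheory.setIntegral_const, Real.volume_real_Ioc, smul_eq_mul]
      rw [max_eq_left (by simp [sub_zero]; positivity), sub_zero]
    simp only [hconst]
    exact ((summable_norm_t ha).mul_left _).mul_left _

lemma integral_poly (p : Polynomial ℂ) :
    (∮ x in C(0, 1), p.eval x * besselRho a x) = L a p := by
  have hexp : ∀ x : ℂ, p.eval x * besselRho a x =
      ∑ i ∈ Finset.range (p.natDegree + 1), p.coeff i * (x ^ i * besselRho a x) := by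
    intro x
    rw [eval_eq_sum_range, Finset.sum_mul]
    simp [mul_assoc]
  have hint : ∀ i : ℕ, IntervalIntegrable (fun θ : ℝ => deriv (circleMap 0 1) θ •
      (p.coeff i * ((circleMap 0 1 θ) ^ i * besselRho a (circleMap 0 1 θ))))
      MeasureTheory.volume 0 (2 * π) := by
    intro i
    apply Continuous.intervalIntegrable
    simp only [deriv_circleMap, smul_eq_mul]
    apply Continuous.mul ((continuous_circleMap 0 1).mul continuous_const)
    apply Continuous.mul continuous_const
    exact ((continuous_circleMap 0 1).pow i).mul (cont_rho_circ ha)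
  calc (∮ x in C(0, 1), p.eval x * besselRho a x)
      = ∫ θ in (0 : ℝ)..(2 * π), ∑ i ∈ Finset.range (p.natDegree + 1),
          deriv (circleMap 0 1) θ •
            (p.coeff i * ((circleMap 0 1 θ) ^ i * besselRho a (circleMap 0 1 θ))) := by
        simp only [circleIntegral, hexp, Finset.smul_sum]
    _ = ∑ i ∈ Finset.range (p.natDegree + 1), ∫ θ in (0 : ℝ)..(2 * π),
          deriv (circleMap 0 1) θ •
            (p.coeff i * ((circleMap 0 1 θ) ^ i * besselRho a (circleMap 0 1 θ))) :=
        intervalIntegral.integral_finset_sum (fun i _ => hint i)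
    _ = ∑ i ∈ Finset.range (p.natDegree + 1), p.coeff i * mu a i := by
        refine Finset.sum_congr rfl fun i _ => ?_
        rw [show (fun θ : ℝ => deriv (circleMap 0 1) θ •
            (p.coeff i * ((circleMap 0 1 θ) ^ i * besselRho a (circleMap 0 1 θ))))
            = fun θ : ℝ => p.coeff i * (deriv (circleMap 0 1) θ •
              ((circleMap 0 1 θ) ^ i * besselRho a (circleMap 0 1 θ)))
          from funext fun θ => by simp only [smul_eq_mul]; ring]
        rw [intervalIntegral.integral_const_mul]
        rw [show (∫ θ in (0 : ℝ)..(2 * π), deriv (circleMap 0 1) θ •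
            ((circleMap 0 1 θ) ^ i * besselRho a (circleMap 0 1 θ)))
            = (∮ x in C(0, 1), x ^ i * besselRho a x) from rfl]
        rw [moment ha i]
    _ = L a p := by
        rw [show (L a) p = p.sum fun j c => c • mu a j from rfl]
        rw [Polynomial.sum_over_range' _ (fun n => zero_smul ℂ (mu a n)) _
          (Nat.lt_succ_self _)]
        simp [smul_eq_mul]

end KrallFrinkAux

end

/-- Krall and Frink's orthogonality relation for the Bessel polynomials on the unit circle. -/
theorem krall_frink_orthogonality (a : ℂ) (ha : ∀ k : ℕ, a - 1 ≠ -(k : ℂ))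
    (m n : ℕ) (hnm : n ≠ m) (yn ym : Polynomial ℂ)
    (hyn : IsBesselPoly1 a n yn) (hym : IsBesselPoly1 a m ym) :
    (∮ x in C(0, 1), Polynomial.eval x yn * Polynomial.eval x ym * besselRho a x) = 0 := by
  classical
  have h1 : (∮ x in C(0, 1), Polynomial.eval x yn * Polynomial.eval x ym * besselRho a x)
      = KrallFrinkAux.L a (yn * ym) := by
    rw [← KrallFrinkAux.integral_poly ha (yn * ym)]
    simp only [Polynomial.eval_mul]
  rw [h1]
  set lam : ℕ → ℂ := fun j => (j : ℂ) * ((j : ℂ) + a - 1) with hlam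
  have smulC : ∀ (c : ℂ) (p : Polynomial ℂ),
      KrallFrinkAux.L a (Polynomial.C c * p) = c * KrallFrinkAux.L a p := by
    intro c p
    rw [← Polynomial.smul_eq_C_mul, map_smul, smul_eq_mul]
  have e1 : lam n * KrallFrinkAux.L a (yn * ym) = lam m * KrallFrinkAux.L a (yn * ym) := by
    calc lam n * KrallFrinkAux.L a (yn * ym)
        = KrallFrinkAux.L a (Polynomial.C (lam n) * (yn * ym)) := (smulC _ _).symm
      _ = KrallFrinkAux.L a ((X ^ 2 * derivative (derivative yn) +
            (Polynomial.C a * X + 2) * derivative yn) * ym) := by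
          rw [show Polynomial.C (lam n) * (yn * ym) = (Polynomial.C (lam n) * yn) * ym from
            (mul_assoc _ _ _).symm, ← hyn.2.2]
      _ = KrallFrinkAux.L a (yn * (X ^ 2 * derivative (derivative ym) +
            (Polynomial.C a * X + 2) * derivative ym)) := KrallFrinkAux.L_symm ha yn ym
      _ = KrallFrinkAux.L a (yn * (Polynomial.C (lam m) * ym)) := by rw [hym.2.2]
      _ = KrallFrinkAux.L a (Polynomial.C (lam m) * (yn * ym)) := by rw [mul_left_comm]
      _ = lam m * KrallFrinkAux.L a (yn * ym) := smulC _ _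
  have hl : lam n ≠ lam m := by
    intro h
    have h2 : ((n : ℂ) - m) * ((n : ℂ) + m + a - 1) = 0 := by
      simp only [hlam] at h
      linear_combination h
    rcases mul_eq_zero.mp h2 with h3 | h3
    · exact hnm (Nat.cast_injective (sub_eq_zero.mp h3))
    · exact ha (n + m) (by push_cast; linear_combination h3)
  by_contra h
  exact hl (mul_right_cancel₀ h e1)
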